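/- For all 0 ≤ k, ℓ ≤ r and every F ∈ C([a,b]×[c,d]), ‖𝐏_{m_k}𝐐_{n_ℓ} F‖_{∞,[a,b]×[c,d]} ≤ C_{m_r,m_k}·C_{n_r,n_ℓ}·‖F‖_{∞,[a,b]×[c,d]}, where C_{m_r,m_k} := C_{m_r}·(m_k+1)·‖E_{m_k}^{m_r}(α^k,:)^{−1}‖_∞ and C_{n_r,n_ℓ} := C_{n_r}·(n_ℓ+1)·‖E_{n_ℓ}^{n_r}(β^ℓ,:)^{−1}‖_∞, with C_{m_r} := max_{0≤i≤m_r} sup{|λ_i^{m_r}f| : ‖f‖_{∞,[a,b]} ≤ 1} and C_{n_r} defined analogously on [c,d], E_{m_k}^{m_r} the degree elevation matrix (λ_i^{m_r}(B_j^{m_k}))_{ij} with invertible row-submatrix E_{m_k}^{m_r}(α^k,:), and ‖·‖_∞ the maximum absolute row sum matrix norm. -/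

import Mathlib

open scoped BigOperators

noncomputable section

/-- Sup norm `‖f‖_{∞,S}` of a function over a set `S`. -/
def supN {α : Type*} (S : Set α) (f : α → ℝ) : ℝ := ⨆ z : S, |f z.1|

/-- Operator norm of `L` over continuous functions on `R` with sup norm `≤ 1`. -/
def opN {α : Type*} [TopologicalSpace α] (R : Set α) (L : (α → ℝ) → α → ℝ) : ℝ :=
  ⨆ G : {G : α → ℝ // ContinuousOn G R ∧ supN R G ≤ 1}, supN R (L G.1)

/-- Bernstein basis function `B_i^m` scaled to `[a,b]`. -/
def bern (m : ℕ) (a b : ℝ) (i : ℕ) : ℝ → ℝ := fun x =>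
  (m.choose i : ℝ) * ((b - x) / (b - a)) ^ (m - i) * ((x - a) / (b - a)) ^ i

/-- Uniform node `x_i^m = a + (i/m)(b-a)`. -/
def node (m : ℕ) (a b : ℝ) (i : ℕ) : ℝ := a + (i : ℝ) / (m : ℝ) * (b - a)

/-- Bernstein collocation matrix `T_m = (B_j^m(x_i^m))_{ij}`. -/
def Tmat (m : ℕ) (a b : ℝ) : Matrix (Fin (m + 1)) (Fin (m + 1)) ℝ := fun i j =>
  bern m a b j (node m a b i)

/-- Dual functionals `λ_j^m f = (T_m⁻¹ · (f(x_i^m))_i)_j`. -/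
def lam (m : ℕ) (a b : ℝ) (j : Fin (m + 1)) (f : ℝ → ℝ) : ℝ :=
  (Tmat m a b)⁻¹.mulVec (fun i => f (node m a b i)) j

/-- `λ_j^m` with a natural-number index (zero out of range). -/
def lamN (m : ℕ) (a b : ℝ) (j : ℕ) (f : ℝ → ℝ) : ℝ :=
  if h : j < m + 1 then lam m a b ⟨j, h⟩ f else 0

/-- The index map `α^k : i ↦ i·(m_r/m_k)` (when `m_k ∣ m_r` and `i ≤ m_k` the `min` is inert). -/
def alphaF (mk mr : ℕ) (i : Fin (mk + 1)) : Fin (mr + 1) :=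
  ⟨min (i.1 * (mr / mk)) mr, Nat.lt_succ_of_le (min_le_right _ _)⟩

/-- Degree elevation matrix `E_{m_k}^{m_r} = (λ_i^{m_r}(B_j^{m_k}))_{ij}`. -/
def Emat (mk mr : ℕ) (a b : ℝ) : Matrix (Fin (mr + 1)) (Fin (mk + 1)) ℝ := fun i j =>
  lam mr a b i (bern mk a b j)

/-- Row submatrix `E_{m_k}^{m_r}(α^k,:)`. -/
def Esub (mk mr : ℕ) (a b : ℝ) : Matrix (Fin (mk + 1)) (Fin (mk + 1)) ℝ := fun i j =>
  Emat mk mr a b (alphaF mk mr i) j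

/-- Dual basis polynomials `D_j^{m_k} = Σ_ℓ (E(α^k,:)⁻¹)_{ℓ j} B_ℓ^{m_k}`. -/
def Dq (mk mr : ℕ) (a b : ℝ) (j : Fin (mk + 1)) : ℝ → ℝ := fun x =>
  ∑ l : Fin (mk + 1), (Esub mk mr a b)⁻¹ l j * bern mk a b l x

/-- `D_j^{m_k}` with a natural-number index (zero out of range). -/
def DqN (mk mr : ℕ) (a b : ℝ) (j : ℕ) : ℝ → ℝ :=
  if h : j < mk + 1 then Dq mk mr a b ⟨j, h⟩ else 0

/-- Functionals `μ_i^{m_k} = λ_{α^k_i}^{m_r}`. -/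
def mu (mk mr : ℕ) (a b : ℝ) (i : Fin (mk + 1)) (f : ℝ → ℝ) : ℝ :=
  lam mr a b (alphaF mk mr i) f

/-- Univariate quasi-interpolant `P_{m_k} f = Σ_i (μ_i^{m_k} f)·D_i^{m_k}`. -/
def Pop (mk mr : ℕ) (a b : ℝ) (f : ℝ → ℝ) : ℝ → ℝ := fun x =>
  ∑ i : Fin (mk + 1), mu mk mr a b i f * Dq mk mr a b i x

/-- Bivariate extension `𝐏_{m_k} = P_{m_k} × I` (acting in the first variable). -/
def PP (mk mr : ℕ) (a b : ℝ) (F : ℝ × ℝ → ℝ) : ℝ × ℝ → ℝ := fun z =>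
  Pop mk mr a b (fun x => F (x, z.2)) z.1

/-- Bivariate extension `𝐐_{n_ℓ} = I × Q_{n_ℓ}` (acting in the second variable). -/
def QQ (nl nr : ℕ) (c d : ℝ) (F : ℝ × ℝ → ℝ) : ℝ × ℝ → ℝ := fun z =>
  Pop nl nr c d (fun y => F (z.1, y)) z.2

/-- Maximum absolute row sum matrix norm. -/
def rowNorm {p q : ℕ} (A : Matrix (Fin p) (Fin q) ℝ) : ℝ := ⨆ i : Fin p, ∑ j, |A i j|

/-- `C_{m_r} = max_i sup{ |λ_i^{m_r} f| : f ∈ C[a,b], ‖f‖_∞ ≤ 1 }`. -/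
def Cbase (mr : ℕ) (a b : ℝ) : ℝ :=
  ⨆ i : Fin (mr + 1),
    ⨆ f : {f : ℝ → ℝ // ContinuousOn f (Set.Icc a b) ∧ supN (Set.Icc a b) f ≤ 1},
      |lam mr a b i f.1|

/-- `C_{m_r,m_k} = C_{m_r}·(m_k+1)·‖E_{m_k}^{m_r}(α^k,:)⁻¹‖_∞`. -/
def Cconst (mk mr : ℕ) (a b : ℝ) : ℝ :=
  Cbase mr a b * ((mk : ℝ) + 1) * rowNorm (Esub mk mr a b)⁻¹

/-- `Π_m`: univariate polynomial functions of degree at most `m`. -/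
def polyF (m : ℕ) : Submodule ℝ (ℝ → ℝ) :=
  Submodule.span ℝ {f : ℝ → ℝ | ∃ i ≤ m, f = fun x => x ^ i}

/-- `Π_p ⊗ Π_q`: bivariate polynomial functions of degree `≤ p` in `x` and `≤ q` in `y`. -/
def polyF2 (p q : ℕ) : Submodule ℝ (ℝ × ℝ → ℝ) :=
  Submodule.span ℝ {F : ℝ × ℝ → ℝ | ∃ i ≤ p, ∃ j ≤ q, F = fun z => z.1 ^ i * z.2 ^ j}

/-- `S_{𝐦,𝐧} = Σ_{k=0}^r Π_{m_k} ⊗ Π_{n_{r-k}}` (as a space of functions). -/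
def SmnF (r : ℕ) (m n : ℕ → ℕ) : Submodule ℝ (ℝ × ℝ → ℝ) :=
  ∑ k ∈ Finset.range (r + 1), polyF2 (m k) (n (r - k))

/-- `Π_p ⊗ Π_q` inside the bivariate polynomial ring. -/
def PiTP (p q : ℕ) : Submodule ℝ (MvPolynomial (Fin 2) ℝ) :=
  Submodule.span ℝ {P | ∃ i ≤ p, ∃ j ≤ q,
    P = MvPolynomial.monomial (Finsupp.single 0 i + Finsupp.single 1 j) (1 : ℝ)}

/-- `S_{𝐦,𝐧} = Σ_{k=0}^r Π_{m_k} ⊗ Π_{n_{r-k}}` in the bivariate polynomial ring. -/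
def SmnP (r : ℕ) (m n : ℕ → ℕ) : Submodule ℝ (MvPolynomial (Fin 2) ℝ) :=
  ∑ k ∈ Finset.range (r + 1), PiTP (m k) (n (r - k))

/-- The rectangle `[a,b] × [c,d]`. -/
def Rect (a b c d : ℝ) : Set (ℝ × ℝ) := Set.Icc a b ×ˢ Set.Icc c d

/-- `Fd` is a system of mixed partial derivatives of `Fd 0 0` of class `C^{p,q}` on the
rectangle: all mixed partials `F^{(i,j)}`, `i ≤ p`, `j ≤ q`, exist and are continuous. -/
def IsCpq (p q : ℕ) (a b c d : ℝ) (Fd : ℕ → ℕ → ℝ × ℝ → ℝ) : Prop :=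
  (∀ i < p, ∀ j ≤ q, ∀ z ∈ Rect a b c d,
      HasDerivWithinAt (fun x => Fd i j (x, z.2)) (Fd (i + 1) j z) (Set.Icc a b) z.1) ∧
  (∀ i ≤ p, ∀ j < q, ∀ z ∈ Rect a b c d,
      HasDerivWithinAt (fun y => Fd i j (z.1, y)) (Fd i (j + 1) z) (Set.Icc c d) z.2) ∧
  (∀ i ≤ p, ∀ j ≤ q, ContinuousOn (Fd i j) (Rect a b c d))

end

section AuxLemmas

open Set

lemma supN_nonneg {α : Type*} (S : Set α) (f : α → ℝ) : 0 ≤ supN S f :=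
  Real.iSup_nonneg fun _ => abs_nonneg _

lemma abs_le_supN {α : Type*} [TopologicalSpace α] {S : Set α} (hS : IsCompact S)
    {f : α → ℝ} (hf : ContinuousOn f S) {z : α} (hz : z ∈ S) : |f z| ≤ supN S f := by
  have hb : BddAbove ((fun z => |f z|) '' S) := hS.bddAbove_image hf.abs
  rw [Set.image_eq_range] at hb
  exact le_ciSup hb (⟨z, hz⟩ : S)

lemma node_mem {a b : ℝ} (hab : a ≤ b) (m : ℕ) (i : Fin (m + 1)) :
    node m a b i ∈ Set.Icc a b := by
  have h1 : 0 ≤ (i : ℝ) / (m : ℝ) := by positivity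
  have h2 : (i : ℝ) / (m : ℝ) ≤ 1 := by
    rcases Nat.eq_zero_or_pos m with hm | hm
    · subst hm
      have h0 : (i : ℕ) = 0 := Nat.lt_one_iff.mp i.isLt
      simp [h0]
    · rw [div_le_one (by exact_mod_cast hm)]
      exact_mod_cast Fin.is_le i
  have hba : (0:ℝ) ≤ b - a := by linarith
  constructor
  · simp only [node]; nlinarith
  · simp only [node]; nlinarith

lemma rowsum_le_rowNorm {p q : ℕ} (A : Matrix (Fin p) (Fin q) ℝ) (i : Fin p) :
    ∑ j, |A i j| ≤ rowNorm A := by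
  rw [rowNorm]
  exact le_ciSup (f := fun i : Fin p => ∑ j, |A i j|) (Set.finite_range _).bddAbove i

lemma rowNorm_nonneg {p q : ℕ} (A : Matrix (Fin p) (Fin q) ℝ) : 0 ≤ rowNorm A :=
  Real.iSup_nonneg fun _ => Finset.sum_nonneg fun _ _ => abs_nonneg _

lemma Cbase_nonneg (m : ℕ) (a b : ℝ) : 0 ≤ Cbase m a b :=
  Real.iSup_nonneg fun _ => Real.iSup_nonneg fun _ => abs_nonneg _

lemma Cconst_nonneg (mk mr : ℕ) (a b : ℝ) : 0 ≤ Cconst mk mr a b :=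
  mul_nonneg (mul_nonneg (Cbase_nonneg _ _ _) (by positivity)) (rowNorm_nonneg _)

lemma lam_abs_le {a b : ℝ} (m : ℕ) (j : Fin (m + 1)) (f : ℝ → ℝ) {M : ℝ}
    (hM : ∀ i : Fin (m + 1), |f (node m a b i)| ≤ M) :
    |lam m a b j f| ≤ (∑ p, |(Tmat m a b)⁻¹ j p|) * M := by
  simp only [lam, Matrix.mulVec, dotProduct]
  calc |∑ p, (Tmat m a b)⁻¹ j p * f (node m a b p)|
      ≤ ∑ p, |(Tmat m a b)⁻¹ j p * f (node m a b p)| := Finset.abs_sum_le_sum_abs _ _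
    _ ≤ ∑ p, |(Tmat m a b)⁻¹ j p| * M := Finset.sum_le_sum fun p _ => by
        rw [abs_mul]; exact mul_le_mul_of_nonneg_left (hM p) (abs_nonneg _)
    _ = _ := by rw [← Finset.sum_mul]

lemma lam_le_Cbase {a b : ℝ} (hab : a ≤ b) (m : ℕ) (i : Fin (m + 1)) (f : ℝ → ℝ)
    (hf : ContinuousOn f (Set.Icc a b)) (h1 : supN (Set.Icc a b) f ≤ 1) :
    |lam m a b i f| ≤ Cbase m a b := by
  have key : ∀ (j : Fin (m + 1))
      (g : {f : ℝ → ℝ // ContinuousOn f (Set.Icc a b) ∧ supN (Set.Icc a b) f ≤ 1}),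
      |lam m a b j g.1| ≤ ∑ p, |(Tmat m a b)⁻¹ j p| := by
    intro j g
    have h := lam_abs_le (a := a) (b := b) m j g.1 (M := 1) fun p =>
      le_trans (abs_le_supN isCompact_Icc g.2.1 (node_mem hab m p)) g.2.2
    simpa using h
  have hbdd : ∀ j : Fin (m + 1), BddAbove (Set.range fun
      g : {f : ℝ → ℝ // ContinuousOn f (Set.Icc a b) ∧ supN (Set.Icc a b) f ≤ 1} =>
      |lam m a b j g.1|) := fun j => ⟨_, by rintro x ⟨g, rfl⟩; exact key j g⟩
  calc |lam m a b i f|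
      ≤ ⨆ g : {f : ℝ → ℝ // ContinuousOn f (Set.Icc a b) ∧ supN (Set.Icc a b) f ≤ 1},
          |lam m a b i g.1| := le_ciSup (hbdd i) ⟨f, hf, h1⟩
    _ ≤ Cbase m a b := by
        rw [Cbase]
        exact le_ciSup (f := fun i : Fin (m + 1) =>
          ⨆ g : {f : ℝ → ℝ // ContinuousOn f (Set.Icc a b) ∧ supN (Set.Icc a b) f ≤ 1},
            |lam m a b i g.1|) (Set.finite_range _).bddAbove i

lemma lam_le_Cbase_mul {a b : ℝ} (hab : a ≤ b) (m : ℕ) (i : Fin (m + 1)) (f : ℝ → ℝ)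
    (hf : ContinuousOn f (Set.Icc a b)) :
    |lam m a b i f| ≤ Cbase m a b * supN (Set.Icc a b) f := by
  set M := supN (Set.Icc a b) f with hMdef
  have hM0 : 0 ≤ M := supN_nonneg _ _
  rcases eq_or_lt_of_le hM0 with hM | hM
  · have hz : ∀ p : Fin (m + 1), |f (node m a b p)| ≤ M := fun p =>
      abs_le_supN isCompact_Icc hf (node_mem hab m p)
    have h := lam_abs_le (a := a) (b := b) m i f hz
    rw [← hM] at h ⊢
    simpa using h
  · set g : ℝ → ℝ := fun x => M⁻¹ * f x with hg
    have hgc : ContinuousOn g (Set.Icc a b) := continuousOn_const.mul hf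
    have hgs : supN (Set.Icc a b) g ≤ 1 := by
      have heq : supN (Set.Icc a b) g = M⁻¹ * supN (Set.Icc a b) f := by
        rw [supN, supN, Real.mul_iSup_of_nonneg (inv_nonneg.2 hM0)]
        exact iSup_congr fun z => by
          simp [hg, abs_mul, abs_of_pos (inv_pos.2 hM)]
      rw [heq, ← hMdef, inv_mul_cancel₀ hM.ne']
    have hfg : lam m a b i f = M * lam m a b i g := by
      simp only [lam, Matrix.mulVec, dotProduct, hg, Finset.mul_sum]
      exact Finset.sum_congr rfl fun p _ => by field_simp
    rw [hfg, abs_mul, abs_of_pos hM, mul_comm (Cbase m a b) M]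
    exact mul_le_mul_of_nonneg_left (lam_le_Cbase hab m i g hgc hgs) hM0

lemma sum_bern {a b : ℝ} (hab : a < b) (m : ℕ) (x : ℝ) :
    ∑ l : Fin (m + 1), bern m a b l x = 1 := by
  have hba : b - a ≠ 0 := sub_ne_zero.2 hab.ne'
  have key : ((x - a) / (b - a) + (b - x) / (b - a)) ^ m = 1 := by
    rw [← add_div, show x - a + (b - x) = b - a by ring, div_self hba, one_pow]
  rw [add_pow] at key
  rw [Fin.sum_univ_eq_sum_range (fun l => bern m a b l x) (m + 1), ← key]
  refine Finset.sum_congr rfl fun l hl => ?_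
  simp only [bern]; ring

lemma bern_nonneg {a b : ℝ} (hab : a < b) (m l : ℕ) {x : ℝ} (hx : x ∈ Set.Icc a b) :
    0 ≤ bern m a b l x := by
  have h1 : 0 ≤ (b - x) / (b - a) := div_nonneg (by linarith [hx.2]) (by linarith)
  have h2 : 0 ≤ (x - a) / (b - a) := div_nonneg (by linarith [hx.1]) (by linarith)
  exact mul_nonneg (mul_nonneg (by positivity) (pow_nonneg h1 _)) (pow_nonneg h2 _)

lemma sum_abs_Dq_le {a b : ℝ} (hab : a < b) (mk mr : ℕ) {x : ℝ} (hx : x ∈ Set.Icc a b) :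
    ∑ i : Fin (mk + 1), |Dq mk mr a b i x| ≤ ((mk : ℝ) + 1) * rowNorm (Esub mk mr a b)⁻¹ := by
  have h1 : ∑ i : Fin (mk + 1), |Dq mk mr a b i x|
      ≤ ∑ i : Fin (mk + 1), ∑ l : Fin (mk + 1),
          |(Esub mk mr a b)⁻¹ l i| * bern mk a b l x := by
    refine Finset.sum_le_sum fun i _ => ?_
    calc |Dq mk mr a b i x| ≤ ∑ l, |(Esub mk mr a b)⁻¹ l i * bern mk a b l x| := by
          simp only [Dq]; exact Finset.abs_sum_le_sum_abs _ _
      _ = ∑ l, |(Esub mk mr a b)⁻¹ l i| * bern mk a b l x := Finset.sum_congr rfl fun l _ => by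
          rw [abs_mul, abs_of_nonneg (bern_nonneg hab mk l hx)]
  rw [Finset.sum_comm] at h1
  have h2 : ∑ l : Fin (mk + 1), ∑ i : Fin (mk + 1),
      |(Esub mk mr a b)⁻¹ l i| * bern mk a b l x
      ≤ rowNorm (Esub mk mr a b)⁻¹ := by
    calc ∑ l : Fin (mk + 1), ∑ i : Fin (mk + 1), |(Esub mk mr a b)⁻¹ l i| * bern mk a b l x
        = ∑ l : Fin (mk + 1), (∑ i, |(Esub mk mr a b)⁻¹ l i|) * bern mk a b l x := by
          simp [Finset.sum_mul]
      _ ≤ ∑ l : Fin (mk + 1), rowNorm (Esub mk mr a b)⁻¹ * bern mk a b l x :=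
          Finset.sum_le_sum fun l _ => mul_le_mul_of_nonneg_right
            (rowsum_le_rowNorm _ l) (bern_nonneg hab mk l hx)
      _ = rowNorm (Esub mk mr a b)⁻¹ * ∑ l : Fin (mk + 1), bern mk a b l x := by
          rw [Finset.mul_sum]
      _ = rowNorm (Esub mk mr a b)⁻¹ := by rw [sum_bern hab, mul_one]
  refine le_trans (le_trans h1 h2) ?_
  have := rowNorm_nonneg (Esub mk mr a b)⁻¹
  nlinarith [Nat.cast_nonneg (α := ℝ) mk]

lemma pop_bound {a b : ℝ} (hab : a < b) (mk mr : ℕ) (f : ℝ → ℝ)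
    (hf : ContinuousOn f (Set.Icc a b)) {x : ℝ} (hx : x ∈ Set.Icc a b) :
    |Pop mk mr a b f x| ≤ Cconst mk mr a b * supN (Set.Icc a b) f := by
  have hmu : ∀ i : Fin (mk + 1), |mu mk mr a b i f|
      ≤ Cbase mr a b * supN (Set.Icc a b) f := fun i =>
    lam_le_Cbase_mul hab.le mr _ f hf
  have hC : 0 ≤ Cbase mr a b * supN (Set.Icc a b) f :=
    mul_nonneg (Cbase_nonneg _ _ _) (supN_nonneg _ _)
  calc |Pop mk mr a b f x|
      ≤ ∑ i : Fin (mk + 1), |mu mk mr a b i f| * |Dq mk mr a b i x| := by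
        simp only [Pop]
        refine le_trans (Finset.abs_sum_le_sum_abs _ _) ?_
        exact le_of_eq (Finset.sum_congr rfl fun i _ => abs_mul _ _)
    _ ≤ ∑ i : Fin (mk + 1), (Cbase mr a b * supN (Set.Icc a b) f) * |Dq mk mr a b i x| :=
        Finset.sum_le_sum fun i _ => mul_le_mul_of_nonneg_right (hmu i) (abs_nonneg _)
    _ = (Cbase mr a b * supN (Set.Icc a b) f) * ∑ i : Fin (mk + 1), |Dq mk mr a b i x| := by
        rw [Finset.mul_sum]
    _ ≤ (Cbase mr a b * supN (Set.Icc a b) f) * (((mk : ℝ) + 1) * rowNorm (Esub mk mr a b)⁻¹) :=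
        mul_le_mul_of_nonneg_left (sum_abs_Dq_le hab mk mr hx) hC
    _ = Cconst mk mr a b * supN (Set.Icc a b) f := by rw [Cconst]; ring

end AuxLemmas

/-- Tensor product stability:
`‖𝐏_{m_k}𝐐_{n_ℓ} F‖_∞ ≤ C_{m_r,m_k}·C_{n_r,n_ℓ}·‖F‖_∞` on `[a,b]×[c,d]`. -/
theorem stmt10 (a b c d : ℝ) (hab : a < b) (hcd : c < d) (r : ℕ) (m n : ℕ → ℕ)
    (hm0 : 0 < m 0) (hn0 : 0 < n 0)
    (hmi : ∀ k < r, m k < m (k + 1)) (hni : ∀ k < r, n k < n (k + 1))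
    (hmd : ∀ k < r, m k ∣ m (k + 1)) (hnd : ∀ k < r, n k ∣ n (k + 1)) :
    ∀ k ≤ r, ∀ l ≤ r, ∀ F : ℝ × ℝ → ℝ, ContinuousOn F (Rect a b c d) →
      supN (Rect a b c d) (PP (m k) (m r) a b (QQ (n l) (n r) c d F)) ≤
        Cconst (m k) (m r) a b * Cconst (n l) (n r) c d * supN (Rect a b c d) F := by
  intro k hk l hl F hF
  have hRcomp : IsCompact (Rect a b c d) := isCompact_Icc.prod isCompact_Icc
  have hmemR : ∀ {x y : ℝ}, x ∈ Set.Icc a b → y ∈ Set.Icc c d → (x, y) ∈ Rect a b c d :=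
    fun hx hy => ⟨hx, hy⟩
  have hFb : ∀ {x y : ℝ}, x ∈ Set.Icc a b → y ∈ Set.Icc c d →
      |F (x, y)| ≤ supN (Rect a b c d) F := fun hx hy => abs_le_supN hRcomp hF (hmemR hx hy)
  have hsec : ∀ x ∈ Set.Icc a b, ContinuousOn (fun y => F (x, y)) (Set.Icc c d) := by
    intro x hx
    exact hF.comp (Continuous.prodMk_right x).continuousOn fun y hy => hmemR hx hy
  have hQ : ∀ x ∈ Set.Icc a b, ∀ y ∈ Set.Icc c d,
      |QQ (n l) (n r) c d F (x, y)| ≤ Cconst (n l) (n r) c d * supN (Rect a b c d) F := by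
    intro x hx y hy
    have h1 : |QQ (n l) (n r) c d F (x, y)|
        ≤ Cconst (n l) (n r) c d * supN (Set.Icc c d) fun y => F (x, y) :=
      pop_bound hcd _ _ _ (hsec x hx) hy
    refine h1.trans (mul_le_mul_of_nonneg_left ?_ (Cconst_nonneg _ _ _ _))
    exact Real.iSup_le (fun z => hFb hx z.2) (supN_nonneg _ _)
  have hQcont : ∀ y0 : ℝ, ContinuousOn (fun x => QQ (n l) (n r) c d F (x, y0))
      (Set.Icc a b) := by
    intro y0
    have heq : (fun x => QQ (n l) (n r) c d F (x, y0)) = fun x =>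
        ∑ j : Fin (n l + 1), (∑ q : Fin (n r + 1),
          (Tmat (n r) c d)⁻¹ (alphaF (n l) (n r) j) q * F (x, node (n r) c d q)) *
          Dq (n l) (n r) c d j y0 := by
      funext x
      simp [QQ, Pop, mu, lam, Matrix.mulVec, dotProduct]
    rw [heq]
    refine continuousOn_finset_sum _ fun j _ => ContinuousOn.mul ?_ continuousOn_const
    refine continuousOn_finset_sum _ fun q _ => ContinuousOn.mul continuousOn_const ?_
    exact hF.comp (continuous_id.prodMk continuous_const).continuousOn
      fun x hx => hmemR hx (node_mem hcd.le _ q)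
  have hpt : ∀ z : Rect a b c d, |PP (m k) (m r) a b (QQ (n l) (n r) c d F) z.1|
      ≤ Cconst (m k) (m r) a b * (Cconst (n l) (n r) c d * supN (Rect a b c d) F) := by
    intro z
    obtain ⟨hz1, hz2⟩ := z.2
    have h1 : |PP (m k) (m r) a b (QQ (n l) (n r) c d F) z.1|
        ≤ Cconst (m k) (m r) a b *
          supN (Set.Icc a b) fun x => QQ (n l) (n r) c d F (x, z.1.2) :=
      pop_bound hab _ _ _ (hQcont z.1.2) hz1
    refine h1.trans (mul_le_mul_of_nonneg_left ?_ (Cconst_nonneg _ _ _ _))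
    exact Real.iSup_le (fun x => hQ x.1 x.2 z.1.2 hz2)
      (mul_nonneg (Cconst_nonneg _ _ _ _) (supN_nonneg _ _))
  rw [mul_assoc, supN]
  exact Real.iSup_le hpt (mul_nonneg (Cconst_nonneg _ _ _ _)
    (mul_nonneg (Cconst_nonneg _ _ _ _) (supN_nonneg _ _)))
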